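/- For real k with 0 < k < 1, set k' = √(1 − k²), and define the complete elliptic integrals K(k) = ∫₀¹ dt/√((1 − t²)(1 − k²t²)) and E(k) = ∫₀¹ √(1 − k²t²)/√(1 − t²) dt. Then the Legendre relation holds: E(k)·K(k') + E(k')·K(k) − K(k)·K(k') = π/2. -/

import Mathlib

/-- The complete elliptic integral of the first kind with real modulus. -/
noncomputable def ellK (k : ℝ) : ℝ :=
  ∫ t in (0:ℝ)..1, 1 / Real.sqrt ((1 - t ^ 2) * (1 - k ^ 2 * t ^ 2))

/-- The complete elliptic integral of the second kind with real modulus. -/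
noncomputable def ellE (k : ℝ) : ℝ :=
  ∫ t in (0:ℝ)..1, Real.sqrt (1 - k ^ 2 * t ^ 2) / Real.sqrt (1 - t ^ 2)

open Real MeasureTheory Set intervalIntegral Metric
open scoped Interval

noncomputable def Kint (k t : ℝ) : ℝ := 1 / Real.sqrt ((1 - t ^ 2) * (1 - k ^ 2 * t ^ 2))
noncomputable def Eint (k t : ℝ) : ℝ := Real.sqrt (1 - k ^ 2 * t ^ 2) / Real.sqrt (1 - t ^ 2)
noncomputable def dEint (k t : ℝ) : ℝ :=
  -(k * t ^ 2) / (Real.sqrt (1 - t ^ 2) * Real.sqrt (1 - k ^ 2 * t ^ 2))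
noncomputable def dKint (k t : ℝ) : ℝ :=
  k * t ^ 2 / (Real.sqrt (1 - t ^ 2) * Real.sqrt (1 - k ^ 2 * t ^ 2) ^ 3)
noncomputable def gInt (k t : ℝ) : ℝ :=
  (1 - 2 * t ^ 2 + k ^ 2 * t ^ 4) / (Real.sqrt (1 - t ^ 2) * Real.sqrt (1 - k ^ 2 * t ^ 2) ^ 3)

noncomputable def Lf : ℝ → ℝ := fun x =>
  ellE x * ellK (Real.sqrt (1 - x ^ 2)) + ellE (Real.sqrt (1 - x ^ 2)) * ellK x -
    ellK x * ellK (Real.sqrt (1 - x ^ 2))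


lemma ae_unitIoc {P : ℝ → Prop} (h : ∀ t : ℝ, 0 < t → t < 1 → P t) :
    ∀ᵐ t : ℝ, t ∈ Ι (0:ℝ) 1 → P t := by
  have h1 : ∀ᵐ t : ℝ, t ≠ (1:ℝ) := by
    rw [ae_iff]
    simp only [not_not, setOf_eq_eq_singleton]
    exact measure_singleton 1
  filter_upwards [h1] with t ht1 ht
  rw [uIoc_of_le (by norm_num : (0:ℝ) ≤ 1)] at ht
  exact h t ht.1 (lt_of_le_of_ne ht.2 ht1)

lemma intInt_one_div_sqrt : IntervalIntegrable (fun t : ℝ => 1 / Real.sqrt (1 - t ^ 2)) volume 0 1 := by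
  have base : IntervalIntegrable (fun x : ℝ => x ^ (-(1/2) : ℝ)) volume 0 1 :=
    intervalIntegrable_rpow' (by norm_num)
  have comp : IntervalIntegrable (fun x : ℝ => (1 - x) ^ (-(1/2) : ℝ)) volume 0 1 := by
    have := (base.comp_sub_left 1).symm
    simpa using this
  apply comp.mono_fun
  · exact (Measurable.div measurable_const
      ((continuous_const.sub (continuous_pow 2)).sqrt.measurable)).aestronglyMeasurable
  · rw [Filter.EventuallyLE, ae_restrict_iff' measurableSet_uIoc]
    apply ae_unitIoc
    intro t ht0 ht1
    have h1t : 0 < 1 - t := by linarith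
    have h1t2 : 0 < 1 - t ^ 2 := by nlinarith
    rw [Real.norm_eq_abs, Real.norm_eq_abs, abs_of_nonneg (by positivity),
      abs_of_nonneg (by positivity)]
    rw [Real.rpow_neg h1t.le, ← Real.sqrt_eq_rpow, ← one_div]
    apply one_div_le_one_div_of_le (Real.sqrt_pos.2 h1t)
    apply Real.sqrt_le_sqrt
    nlinarith

/-- The workhorse integrability criterion. -/
lemma intInt_of_bound (f : ℝ → ℝ) (hm : AEStronglyMeasurable f (volume.restrict (Ι (0:ℝ) 1)))
    (C : ℝ) (hb : ∀ t : ℝ, 0 < t → t < 1 → |f t| ≤ C * (1 / Real.sqrt (1 - t ^ 2))) :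
    IntervalIntegrable f volume 0 1 := by
  apply (intInt_one_div_sqrt.const_mul C).mono_fun hm
  rw [Filter.EventuallyLE, ae_restrict_iff' measurableSet_uIoc]
  apply ae_unitIoc
  intro t ht0 ht1
  have h1t2 : 0 < 1 - t ^ 2 := by nlinarith
  have := hb t ht0 ht1
  rw [Real.norm_eq_abs, Real.norm_eq_abs]
  calc |f t| ≤ C * (1 / Real.sqrt (1 - t ^ 2)) := this
  _ ≤ |C * (1 / Real.sqrt (1 - t ^ 2))| := le_abs_self _

lemma ftc01 {G g : ℝ → ℝ} (hcont : ContinuousOn G (Icc 0 1))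
    (hd : ∀ t ∈ Ioo (0:ℝ) 1, HasDerivAt G (g t) t)
    (hint : IntervalIntegrable g volume 0 1) :
    ∫ t in (0:ℝ)..1, g t = G 1 - G 0 :=
  integral_eq_sub_of_hasDeriv_right_of_le (by norm_num) hcont
    (fun t ht => (hd t ht).hasDerivWithinAt) hint

lemma integral_one_div_sqrt : ∫ t in (0:ℝ)..1, 1 / Real.sqrt (1 - t ^ 2) = π / 2 := by
  have := ftc01 (G := Real.arcsin) (g := fun t => 1 / Real.sqrt (1 - t ^ 2))
    Real.continuous_arcsin.continuousOn
    (fun t ht => Real.hasDerivAt_arcsin (by linarith [ht.1]) (ne_of_lt ht.2))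
    intInt_one_div_sqrt
  rw [this, Real.arcsin_one, Real.arcsin_zero, sub_zero]

section meas
variable (k : ℝ)
lemma meas_s : Measurable (fun t : ℝ => Real.sqrt (1 - t ^ 2)) :=
  (continuous_const.sub (continuous_pow 2)).sqrt.measurable
lemma meas_u : Measurable (fun t : ℝ => Real.sqrt (1 - k ^ 2 * t ^ 2)) :=
  (continuous_const.sub (continuous_const.mul (continuous_pow 2))).sqrt.measurable
lemma meas_Kint : Measurable (Kint k) :=
  Measurable.div measurable_const
    ((continuous_const.sub (continuous_pow 2)).mul
      (continuous_const.sub (continuous_const.mul (continuous_pow 2)))).sqrt.measurable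
lemma meas_Eint : Measurable (Eint k) := (meas_u k).div meas_s
lemma meas_dEint : Measurable (dEint k) :=
  (measurable_const.mul (measurable_id.pow_const 2)).neg.div ((meas_s).mul (meas_u k))
lemma meas_dKint : Measurable (dKint k) :=
  (measurable_const.mul (measurable_id.pow_const 2)).div ((meas_s).mul ((meas_u k).pow_const 3))
lemma meas_gInt : Measurable (gInt k) := by
  apply Measurable.div
  · exact ((measurable_const.sub (measurable_const.mul (measurable_id.pow_const 2))).add
      (measurable_const.mul (measurable_id.pow_const 4)))
  · exact (meas_s).mul ((meas_u k).pow_const 3)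
end meas


section pos
variable {k t : ℝ}
lemma pos_1t (h0 : 0 < t) (h1 : t < 1) : 0 < 1 - t ^ 2 := by nlinarith
lemma pos_1kt (hk0 : 0 ≤ k) (hk1 : k < 1) (ht0 : 0 ≤ t) (ht : t ≤ 1) : 0 < 1 - k ^ 2 * t ^ 2 := by
  have h1 : t ^ 2 ≤ 1 := by nlinarith
  have h2 : k ^ 2 < 1 := by nlinarith
  nlinarith [mul_le_mul_of_nonneg_left h1 (sq_nonneg k)]
lemma le_1kt (hk0 : 0 ≤ k) (ht0 : 0 ≤ t) (ht : t ≤ 1) : 1 - k ^ 2 ≤ 1 - k ^ 2 * t ^ 2 := by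
  have h1 : t ^ 2 ≤ 1 := by nlinarith
  nlinarith [mul_le_mul_of_nonneg_left h1 (sq_nonneg k)]
end pos

section intInt
variable {k : ℝ} (hk0 : 0 < k) (hk1 : k < 1)
include hk0 hk1

lemma sqrt_w_pos : 0 < Real.sqrt (1 - k ^ 2) := Real.sqrt_pos.2 (by nlinarith)

lemma intInt_Kint : IntervalIntegrable (Kint k) volume 0 1 := by
  apply intInt_of_bound _ (meas_Kint k).aestronglyMeasurable (1 / Real.sqrt (1 - k ^ 2))
  intro t ht0 ht1
  have h1 := pos_1t ht0 ht1
  have h2 := pos_1kt hk0.le hk1 ht0.le ht1.le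
  have hw := sqrt_w_pos hk0 hk1
  have hs : 0 < Real.sqrt (1 - t ^ 2) := Real.sqrt_pos.2 h1
  have hu : 0 < Real.sqrt (1 - k ^ 2 * t ^ 2) := Real.sqrt_pos.2 h2
  have hwu : Real.sqrt (1 - k ^ 2) ≤ Real.sqrt (1 - k ^ 2 * t ^ 2) :=
    Real.sqrt_le_sqrt (le_1kt hk0.le ht0.le ht1.le)
  rw [Kint, abs_of_nonneg (by positivity), Real.sqrt_mul h1.le, div_mul_div_comm, one_mul]
  apply one_div_le_one_div_of_le (by positivity)
  rw [mul_comm]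
  exact mul_le_mul_of_nonneg_left hwu hs.le

lemma intInt_Eint : IntervalIntegrable (Eint k) volume 0 1 := by
  apply intInt_of_bound _ (meas_Eint k).aestronglyMeasurable 1
  intro t ht0 ht1
  have h1 := pos_1t ht0 ht1
  have h2 := pos_1kt hk0.le hk1 ht0.le ht1.le
  have hs : 0 < Real.sqrt (1 - t ^ 2) := Real.sqrt_pos.2 h1
  have hu1 : Real.sqrt (1 - k ^ 2 * t ^ 2) ≤ 1 :=
    Real.sqrt_le_one.2 (by nlinarith [sq_nonneg (k * t)])
  rw [Eint, abs_of_nonneg (by positivity), one_mul]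
  gcongr

lemma intInt_dEint : IntervalIntegrable (dEint k) volume 0 1 := by
  apply intInt_of_bound _ (meas_dEint k).aestronglyMeasurable (1 / Real.sqrt (1 - k ^ 2))
  intro t ht0 ht1
  have h1 := pos_1t ht0 ht1
  have h2 := pos_1kt hk0.le hk1 ht0.le ht1.le
  have hw := sqrt_w_pos hk0 hk1
  have hs : 0 < Real.sqrt (1 - t ^ 2) := Real.sqrt_pos.2 h1
  have hu : 0 < Real.sqrt (1 - k ^ 2 * t ^ 2) := Real.sqrt_pos.2 h2
  have hwu : Real.sqrt (1 - k ^ 2) ≤ Real.sqrt (1 - k ^ 2 * t ^ 2) :=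
    Real.sqrt_le_sqrt (le_1kt hk0.le ht0.le ht1.le)
  rw [dEint, abs_div, abs_neg, abs_of_nonneg (by positivity), abs_of_nonneg (by positivity),
    div_mul_div_comm, one_mul]
  rw [div_le_div_iff₀ (by positivity) (by positivity)]
  have hkt : k * t ^ 2 ≤ 1 := by nlinarith
  calc k * t ^ 2 * (Real.sqrt (1 - k ^ 2) * Real.sqrt (1 - t ^ 2))
      ≤ 1 * (Real.sqrt (1 - k ^ 2 * t ^ 2) * Real.sqrt (1 - t ^ 2)) := by
        apply mul_le_mul hkt (mul_le_mul_of_nonneg_right hwu hs.le) (by positivity) (by norm_num)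
  _ = 1 * (Real.sqrt (1 - t ^ 2) * Real.sqrt (1 - k ^ 2 * t ^ 2)) := by ring

lemma intInt_dKint : IntervalIntegrable (dKint k) volume 0 1 := by
  apply intInt_of_bound _ (meas_dKint k).aestronglyMeasurable (1 / Real.sqrt (1 - k ^ 2) ^ 3)
  intro t ht0 ht1
  have h1 := pos_1t ht0 ht1
  have h2 := pos_1kt hk0.le hk1 ht0.le ht1.le
  have hw := sqrt_w_pos hk0 hk1
  have hs : 0 < Real.sqrt (1 - t ^ 2) := Real.sqrt_pos.2 h1
  have hu : 0 < Real.sqrt (1 - k ^ 2 * t ^ 2) := Real.sqrt_pos.2 h2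
  have hwu : Real.sqrt (1 - k ^ 2) ≤ Real.sqrt (1 - k ^ 2 * t ^ 2) :=
    Real.sqrt_le_sqrt (le_1kt hk0.le ht0.le ht1.le)
  rw [dKint, abs_div, abs_of_nonneg (by positivity), abs_of_nonneg (by positivity),
    div_mul_div_comm, one_mul]
  rw [div_le_div_iff₀ (by positivity) (by positivity)]
  have hkt : k * t ^ 2 ≤ 1 := by nlinarith
  have h3 : Real.sqrt (1 - k ^ 2) ^ 3 ≤ Real.sqrt (1 - k ^ 2 * t ^ 2) ^ 3 := by
    exact pow_le_pow_left₀ hw.le hwu 3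
  calc k * t ^ 2 * (Real.sqrt (1 - k ^ 2) ^ 3 * Real.sqrt (1 - t ^ 2))
      ≤ 1 * (Real.sqrt (1 - k ^ 2 * t ^ 2) ^ 3 * Real.sqrt (1 - t ^ 2)) := by
        apply mul_le_mul hkt (mul_le_mul_of_nonneg_right h3 hs.le) (by positivity) (by norm_num)
  _ = 1 * (Real.sqrt (1 - t ^ 2) * Real.sqrt (1 - k ^ 2 * t ^ 2) ^ 3) := by ring

lemma intInt_gInt : IntervalIntegrable (gInt k) volume 0 1 := by
  apply intInt_of_bound _ (meas_gInt k).aestronglyMeasurable (4 / Real.sqrt (1 - k ^ 2) ^ 3)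
  intro t ht0 ht1
  have h1 := pos_1t ht0 ht1
  have h2 := pos_1kt hk0.le hk1 ht0.le ht1.le
  have hw := sqrt_w_pos hk0 hk1
  have hs : 0 < Real.sqrt (1 - t ^ 2) := Real.sqrt_pos.2 h1
  have hu : 0 < Real.sqrt (1 - k ^ 2 * t ^ 2) := Real.sqrt_pos.2 h2
  have hwu : Real.sqrt (1 - k ^ 2) ≤ Real.sqrt (1 - k ^ 2 * t ^ 2) :=
    Real.sqrt_le_sqrt (le_1kt hk0.le ht0.le ht1.le)
  have h3 : Real.sqrt (1 - k ^ 2) ^ 3 ≤ Real.sqrt (1 - k ^ 2 * t ^ 2) ^ 3 :=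
    pow_le_pow_left₀ hw.le hwu 3
  have hnum : |1 - 2 * t ^ 2 + k ^ 2 * t ^ 4| ≤ 4 := by
    rw [abs_le]; constructor <;> nlinarith
  rw [gInt, abs_div, abs_of_nonneg (a := Real.sqrt (1 - t ^ 2) * Real.sqrt (1 - k ^ 2 * t ^ 2) ^ 3) (by positivity),
    div_mul_div_comm, mul_one]
  rw [div_le_div_iff₀ (by positivity) (by positivity)]
  calc |1 - 2 * t ^ 2 + k ^ 2 * t ^ 4| * (Real.sqrt (1 - k ^ 2) ^ 3 * Real.sqrt (1 - t ^ 2))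
      ≤ 4 * (Real.sqrt (1 - k ^ 2 * t ^ 2) ^ 3 * Real.sqrt (1 - t ^ 2)) := by
        apply mul_le_mul hnum (mul_le_mul_of_nonneg_right h3 hs.le) (by positivity) (by norm_num)
  _ = 4 * (Real.sqrt (1 - t ^ 2) * Real.sqrt (1 - k ^ 2 * t ^ 2) ^ 3) := by ring

end intInt

section ptderiv
variable {x t : ℝ}

lemma hasDerivAt_Eint_k (ht0 : 0 < t) (ht1 : t < 1) (hx : x ^ 2 < 1) :
    HasDerivAt (fun y => Eint y t) (dEint x t) x := by
  have h1 : 0 < 1 - t ^ 2 := by nlinarith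
  have h2 : 0 < 1 - x ^ 2 * t ^ 2 := by nlinarith [sq_nonneg x, sq_nonneg (x*t)]
  have hs : 0 < Real.sqrt (1 - t ^ 2) := Real.sqrt_pos.2 h1
  have hu : 0 < Real.sqrt (1 - x ^ 2 * t ^ 2) := Real.sqrt_pos.2 h2
  have hin : HasDerivAt (fun y : ℝ => 1 - y ^ 2 * t ^ 2) (-(2 * x * t ^ 2)) x := by
    have := ((hasDerivAt_pow 2 x).mul_const (t ^ 2)).const_sub 1
    refine this.congr_deriv ?_
    ring
  have hsq := hin.sqrt (ne_of_gt h2)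
  have := hsq.div_const (Real.sqrt (1 - t ^ 2))
  refine this.congr_deriv ?_
  rw [dEint]
  field_simp

lemma hasDerivAt_Kint_k (ht0 : 0 < t) (ht1 : t < 1) (hx : x ^ 2 < 1) :
    HasDerivAt (fun y => Kint y t) (dKint x t) x := by
  have h1 : 0 < 1 - t ^ 2 := by nlinarith
  have h2 : 0 < 1 - x ^ 2 * t ^ 2 := by nlinarith [sq_nonneg x, sq_nonneg (x*t)]
  have hP : 0 < (1 - t ^ 2) * (1 - x ^ 2 * t ^ 2) := mul_pos h1 h2
  have hs : 0 < Real.sqrt (1 - t ^ 2) := Real.sqrt_pos.2 h1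
  have hu : 0 < Real.sqrt (1 - x ^ 2 * t ^ 2) := Real.sqrt_pos.2 h2
  have hin : HasDerivAt (fun y : ℝ => (1 - t ^ 2) * (1 - y ^ 2 * t ^ 2))
      ((1 - t ^ 2) * -(2 * x * t ^ 2)) x := by
    have h0 : HasDerivAt (fun y : ℝ => 1 - y ^ 2 * t ^ 2) (-(2 * x * t ^ 2)) x := by
      have := ((hasDerivAt_pow 2 x).mul_const (t ^ 2)).const_sub 1
      refine this.congr_deriv ?_
      ring
    exact h0.const_mul (1 - t ^ 2)
  have hsq := hin.sqrt (ne_of_gt hP)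
  have hinv := hsq.inv (ne_of_gt (Real.sqrt_pos.2 hP))
  have heq : (fun y => Kint y t) = fun y => (Real.sqrt ((1 - t ^ 2) * (1 - y ^ 2 * t ^ 2)))⁻¹ := by
    funext y
    rw [Kint, one_div]
  rw [heq]
  refine hinv.congr_deriv ?_
  rw [dKint, Real.sqrt_mul h1.le]
  have hssq : Real.sqrt (1 - t ^ 2) ^ 2 = 1 - t ^ 2 := Real.sq_sqrt h1.le
  have husq : Real.sqrt (1 - x ^ 2 * t ^ 2) ^ 2 = 1 - x ^ 2 * t ^ 2 := Real.sq_sqrt h2.le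
  field_simp
  rw [hssq]
  ring

end ptderiv

section bounds
variable {x t m : ℝ}

lemma abs_le_aux (hm1 : m < 1) (hx : |x| ≤ m) (ht0 : 0 < t) (ht1 : t < 1) :
    0 < 1 - t ^ 2 ∧ 0 < 1 - m ^ 2 ∧ 1 - m ^ 2 ≤ 1 - x ^ 2 * t ^ 2 := by
  have hm0 : 0 ≤ m := (abs_nonneg x).trans hx
  have hx2 : x ^ 2 ≤ m ^ 2 := by
    rw [← sq_abs]
    exact pow_le_pow_left₀ (abs_nonneg x) hx 2
  have h1 : 0 < 1 - t ^ 2 := by nlinarith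
  have h2 : 0 < 1 - m ^ 2 := by nlinarith
  refine ⟨h1, h2, ?_⟩
  nlinarith [sq_nonneg x, sq_nonneg t, mul_le_mul_of_nonneg_right hx2 (sq_nonneg t)]

lemma abs_dEint_le (hm1 : m < 1) (hx : |x| ≤ m) (ht0 : 0 < t) (ht1 : t < 1) :
    |dEint x t| ≤ (1 / Real.sqrt (1 - m ^ 2)) * (1 / Real.sqrt (1 - t ^ 2)) := by
  obtain ⟨h1, h2, h3⟩ := abs_le_aux hm1 hx ht0 ht1
  have hs : 0 < Real.sqrt (1 - t ^ 2) := Real.sqrt_pos.2 h1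
  have hw : 0 < Real.sqrt (1 - m ^ 2) := Real.sqrt_pos.2 h2
  have hu : 0 < Real.sqrt (1 - x ^ 2 * t ^ 2) := Real.sqrt_pos.2 (lt_of_lt_of_le h2 h3)
  have hwu : Real.sqrt (1 - m ^ 2) ≤ Real.sqrt (1 - x ^ 2 * t ^ 2) := Real.sqrt_le_sqrt h3
  have hxt : |x| * t ^ 2 ≤ 1 := by nlinarith [abs_nonneg x]
  rw [dEint, abs_div, abs_neg, abs_mul, abs_of_nonneg (sq_nonneg t),
    abs_of_nonneg (by positivity : (0:ℝ) ≤ Real.sqrt (1 - t ^ 2) * Real.sqrt (1 - x ^ 2 * t ^ 2)),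
    div_mul_div_comm, one_mul]
  rw [div_le_div_iff₀ (by positivity) (by positivity)]
  calc |x| * t ^ 2 * (Real.sqrt (1 - m ^ 2) * Real.sqrt (1 - t ^ 2))
      ≤ 1 * (Real.sqrt (1 - x ^ 2 * t ^ 2) * Real.sqrt (1 - t ^ 2)) :=
        mul_le_mul hxt (mul_le_mul_of_nonneg_right hwu hs.le) (by positivity) (by norm_num)
  _ = 1 * (Real.sqrt (1 - t ^ 2) * Real.sqrt (1 - x ^ 2 * t ^ 2)) := by ring

lemma abs_dKint_le (hm1 : m < 1) (hx : |x| ≤ m) (ht0 : 0 < t) (ht1 : t < 1) :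
    |dKint x t| ≤ (1 / Real.sqrt (1 - m ^ 2) ^ 3) * (1 / Real.sqrt (1 - t ^ 2)) := by
  obtain ⟨h1, h2, h3⟩ := abs_le_aux hm1 hx ht0 ht1
  have hs : 0 < Real.sqrt (1 - t ^ 2) := Real.sqrt_pos.2 h1
  have hw : 0 < Real.sqrt (1 - m ^ 2) := Real.sqrt_pos.2 h2
  have hu : 0 < Real.sqrt (1 - x ^ 2 * t ^ 2) := Real.sqrt_pos.2 (lt_of_lt_of_le h2 h3)
  have hwu : Real.sqrt (1 - m ^ 2) ^ 3 ≤ Real.sqrt (1 - x ^ 2 * t ^ 2) ^ 3 :=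
    pow_le_pow_left₀ hw.le (Real.sqrt_le_sqrt h3) 3
  have hxt : |x| * t ^ 2 ≤ 1 := by nlinarith [abs_nonneg x]
  rw [dKint, abs_div, abs_mul, abs_of_nonneg (sq_nonneg t),
    abs_of_nonneg (by positivity : (0:ℝ) ≤ Real.sqrt (1 - t ^ 2) * Real.sqrt (1 - x ^ 2 * t ^ 2) ^ 3),
    div_mul_div_comm, one_mul]
  rw [div_le_div_iff₀ (by positivity) (by positivity)]
  calc |x| * t ^ 2 * (Real.sqrt (1 - m ^ 2) ^ 3 * Real.sqrt (1 - t ^ 2))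
      ≤ 1 * (Real.sqrt (1 - x ^ 2 * t ^ 2) ^ 3 * Real.sqrt (1 - t ^ 2)) :=
        mul_le_mul hxt (mul_le_mul_of_nonneg_right hwu hs.le) (by positivity) (by norm_num)
  _ = 1 * (Real.sqrt (1 - t ^ 2) * Real.sqrt (1 - x ^ 2 * t ^ 2) ^ 3) := by ring

end bounds

section dunder
variable {k : ℝ} (hk0 : 0 < k) (hk1 : k < 1)
include hk0 hk1

lemma ball_abs_le {x : ℝ} (hx : x ∈ ball k ((1 - k) / 2)) : |x| ≤ (1 + k) / 2 := by
  rw [mem_ball, Real.dist_eq] at hx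
  rw [abs_lt] at hx
  rw [abs_le]
  constructor <;> [linarith [hx.1]; linarith [hx.2] ]

lemma hasDerivAt_intE :
    HasDerivAt (fun x => ∫ t in (0:ℝ)..1, Eint x t) (∫ t in (0:ℝ)..1, dEint k t) k := by
  have hm1 : (1 + k) / 2 < 1 := by linarith
  have hε : 0 < (1 - k) / 2 := by linarith
  refine (hasDerivAt_integral_of_dominated_loc_of_deriv_le (𝕜 := ℝ)
    (F := fun x t => Eint x t) (F' := fun x t => dEint x t)
    (bound := fun t => (1 / Real.sqrt (1 - ((1 + k) / 2) ^ 2)) * (1 / Real.sqrt (1 - t ^ 2)))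
    (ball_mem_nhds k hε) ?_ (intInt_Eint hk0 hk1) ?_ ?_ ?_ ?_).2
  · exact Filter.Eventually.of_forall (fun x => (meas_Eint x).aestronglyMeasurable)
  · exact (meas_dEint k).aestronglyMeasurable
  · apply ae_unitIoc
    intro t ht0 ht1 x hx
    rw [Real.norm_eq_abs]
    exact abs_dEint_le hm1 (ball_abs_le hk0 hk1 hx) ht0 ht1
  · exact intInt_one_div_sqrt.const_mul _
  · apply ae_unitIoc
    intro t ht0 ht1 x hx
    have := ball_abs_le hk0 hk1 hx
    have hx2 : x ^ 2 < 1 := by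
      rw [← sq_abs]
      nlinarith [abs_nonneg x]
    exact hasDerivAt_Eint_k ht0 ht1 hx2

lemma hasDerivAt_intK :
    HasDerivAt (fun x => ∫ t in (0:ℝ)..1, Kint x t) (∫ t in (0:ℝ)..1, dKint k t) k := by
  have hm1 : (1 + k) / 2 < 1 := by linarith
  have hε : 0 < (1 - k) / 2 := by linarith
  refine (hasDerivAt_integral_of_dominated_loc_of_deriv_le (𝕜 := ℝ)
    (F := fun x t => Kint x t) (F' := fun x t => dKint x t)
    (bound := fun t => (1 / Real.sqrt (1 - ((1 + k) / 2) ^ 2) ^ 3) * (1 / Real.sqrt (1 - t ^ 2)))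
    (ball_mem_nhds k hε) ?_ (intInt_Kint hk0 hk1) ?_ ?_ ?_ ?_).2
  · exact Filter.Eventually.of_forall (fun x => (meas_Kint x).aestronglyMeasurable)
  · exact (meas_dKint k).aestronglyMeasurable
  · apply ae_unitIoc
    intro t ht0 ht1 x hx
    rw [Real.norm_eq_abs]
    exact abs_dKint_le hm1 (ball_abs_le hk0 hk1 hx) ht0 ht1
  · exact intInt_one_div_sqrt.const_mul _
  · apply ae_unitIoc
    intro t ht0 ht1 x hx
    have := ball_abs_le hk0 hk1 hx
    have hx2 : x ^ 2 < 1 := by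
      rw [← sq_abs]
      nlinarith [abs_nonneg x]
    exact hasDerivAt_Kint_k ht0 ht1 hx2

end dunder

section identities
variable {k : ℝ} (hk0 : 0 < k) (hk1 : k < 1)
include hk0 hk1

lemma int_dEint_eq :
    ∫ t in (0:ℝ)..1, dEint k t =
      ((∫ t in (0:ℝ)..1, Eint k t) - ∫ t in (0:ℝ)..1, Kint k t) / k := by
  have hcong : ∫ t in (0:ℝ)..1, dEint k t =
      ∫ t in (0:ℝ)..1, (Eint k t - Kint k t) / k := by
    apply intervalIntegral.integral_congr_ae
    apply ae_unitIoc
    intro t ht0 ht1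
    have h1 := pos_1t ht0 ht1
    have h2 := pos_1kt hk0.le hk1 ht0.le ht1.le
    have hs : 0 < Real.sqrt (1 - t ^ 2) := Real.sqrt_pos.2 h1
    have hu : 0 < Real.sqrt (1 - k ^ 2 * t ^ 2) := Real.sqrt_pos.2 h2
    have husq : Real.sqrt (1 - k ^ 2 * t ^ 2) ^ 2 = 1 - k ^ 2 * t ^ 2 := Real.sq_sqrt h2.le
    rw [dEint, Eint, Kint, Real.sqrt_mul h1.le]
    field_simp
    linear_combination -husq
  rw [hcong, intervalIntegral.integral_div, intervalIntegral.integral_sub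
    (intInt_Eint hk0 hk1) (intInt_Kint hk0 hk1)]

lemma int_gInt_eq : ∫ t in (0:ℝ)..1, gInt k t = 0 := by
  set G : ℝ → ℝ := fun t => t * Real.sqrt (1 - t ^ 2) / Real.sqrt (1 - k ^ 2 * t ^ 2) with hG
  have hcont : ContinuousOn G (Icc 0 1) := by
    apply ContinuousOn.div
    · exact (continuous_id.mul (continuous_const.sub (continuous_pow 2)).sqrt).continuousOn
    · exact (continuous_const.sub (continuous_const.mul (continuous_pow 2))).sqrt.continuousOn
    · intro t ht
      exact ne_of_gt (Real.sqrt_pos.2 (pos_1kt hk0.le hk1 ht.1 ht.2))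
  have hderiv : ∀ t ∈ Ioo (0:ℝ) 1, HasDerivAt G (gInt k t) t := by
    intro t ht
    obtain ⟨ht0, ht1⟩ := ht
    have h1 := pos_1t ht0 ht1
    have h2 := pos_1kt hk0.le hk1 ht0.le ht1.le
    have hs : 0 < Real.sqrt (1 - t ^ 2) := Real.sqrt_pos.2 h1
    have hu : 0 < Real.sqrt (1 - k ^ 2 * t ^ 2) := Real.sqrt_pos.2 h2
    have hssq : Real.sqrt (1 - t ^ 2) ^ 2 = 1 - t ^ 2 := Real.sq_sqrt h1.le
    have husq : Real.sqrt (1 - k ^ 2 * t ^ 2) ^ 2 = 1 - k ^ 2 * t ^ 2 := Real.sq_sqrt h2.le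
    have hin1 : HasDerivAt (fun y : ℝ => 1 - y ^ 2) (-(2 * t)) t := by
      have := (hasDerivAt_pow 2 t).const_sub 1
      refine this.congr_deriv ?_
      ring
    have hnum : HasDerivAt (fun y : ℝ => y * Real.sqrt (1 - y ^ 2))
        (1 * Real.sqrt (1 - t ^ 2) + t * (-(2 * t) / (2 * Real.sqrt (1 - t ^ 2)))) t :=
      (hasDerivAt_id t).mul (hin1.sqrt (ne_of_gt h1))
    have hin2 : HasDerivAt (fun y : ℝ => 1 - k ^ 2 * y ^ 2) (-(2 * k ^ 2 * t)) t := by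
      have := ((hasDerivAt_pow 2 t).const_mul (k ^ 2)).const_sub 1
      refine this.congr_deriv ?_
      ring
    have hden := hin2.sqrt (ne_of_gt h2)
    have := hnum.div hden (ne_of_gt hu)
    refine this.congr_deriv ?_
    rw [gInt]
    field_simp
    congr 1
    linear_combination (Real.sqrt (1 - t ^ 2 * k ^ 2) ^ 2 + t ^ 2 * k ^ 2) * hssq + (1 - 2 * t ^ 2) * (Real.sq_sqrt (by linarith) : Real.sqrt (1 - t ^ 2 * k ^ 2) ^ 2 = 1 - t ^ 2 * k ^ 2)
  have := ftc01 hcont hderiv (intInt_gInt hk0 hk1)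
  rw [this, hG]
  norm_num

lemma int_dKint_eq :
    ∫ t in (0:ℝ)..1, dKint k t =
      ((∫ t in (0:ℝ)..1, Eint k t) - (1 - k ^ 2) * ∫ t in (0:ℝ)..1, Kint k t) /
        (k * (1 - k ^ 2)) := by
  have hk2 : 0 < 1 - k ^ 2 := by nlinarith
  have hEq : ∫ t in (0:ℝ)..1, (Eint k t - (1 - k ^ 2) * Kint k t) =
      ∫ t in (0:ℝ)..1, (k * (1 - k ^ 2) * dKint k t + k ^ 2 * gInt k t) := by
    apply intervalIntegral.integral_congr_ae
    apply ae_unitIoc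
    intro t ht0 ht1
    have h1 := pos_1t ht0 ht1
    have h2 := pos_1kt hk0.le hk1 ht0.le ht1.le
    have hs : 0 < Real.sqrt (1 - t ^ 2) := Real.sqrt_pos.2 h1
    have hu : 0 < Real.sqrt (1 - k ^ 2 * t ^ 2) := Real.sqrt_pos.2 h2
    have husq : Real.sqrt (1 - k ^ 2 * t ^ 2) ^ 2 = 1 - k ^ 2 * t ^ 2 := Real.sq_sqrt h2.le
    rw [Eint, Kint, dKint, gInt, Real.sqrt_mul h1.le]
    field_simp
    linear_combination (Real.sqrt (1 - k ^ 2 * t ^ 2) ^ 2 + (1 - k ^ 2 * t ^ 2) - 1 + k ^ 2) * husq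
  have hL : ∫ t in (0:ℝ)..1, (Eint k t - (1 - k ^ 2) * Kint k t) =
      (∫ t in (0:ℝ)..1, Eint k t) - (1 - k ^ 2) * ∫ t in (0:ℝ)..1, Kint k t := by
    rw [intervalIntegral.integral_sub (intInt_Eint hk0 hk1)
      ((intInt_Kint hk0 hk1).const_mul _), intervalIntegral.integral_const_mul]
  have hR : ∫ t in (0:ℝ)..1, (k * (1 - k ^ 2) * dKint k t + k ^ 2 * gInt k t) =
      k * (1 - k ^ 2) * ∫ t in (0:ℝ)..1, dKint k t := by
    rw [intervalIntegral.integral_add ((intInt_dKint hk0 hk1).const_mul _)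
      ((intInt_gInt hk0 hk1).const_mul _), intervalIntegral.integral_const_mul,
      intervalIntegral.integral_const_mul, int_gInt_eq hk0 hk1]
    ring
  rw [hL, hR] at hEq
  field_simp [hEq]
  linear_combination -hEq

end identities

section Lfun

lemma hasDerivAt_ellE {k : ℝ} (hk0 : 0 < k) (hk1 : k < 1) :
    HasDerivAt ellE ((ellE k - ellK k) / k) k := by
  have h := hasDerivAt_intE hk0 hk1
  rw [int_dEint_eq hk0 hk1] at h
  exact h

lemma hasDerivAt_ellK {k : ℝ} (hk0 : 0 < k) (hk1 : k < 1) :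
    HasDerivAt ellK ((ellE k - (1 - k ^ 2) * ellK k) / (k * (1 - k ^ 2))) k := by
  have h := hasDerivAt_intK hk0 hk1
  rw [int_dKint_eq hk0 hk1] at h
  exact h

lemma hasDerivAt_comp_sqrt {k : ℝ} (hk0 : 0 < k) (hk1 : k < 1) :
    HasDerivAt (fun x : ℝ => Real.sqrt (1 - x ^ 2)) (-k / Real.sqrt (1 - k ^ 2)) k := by
  have hpos : 0 < 1 - k ^ 2 := by nlinarith
  have := ((hasDerivAt_pow 2 k).const_sub 1).sqrt (ne_of_gt hpos)
  convert this using 1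
  have hw : 0 < Real.sqrt (1 - k ^ 2) := Real.sqrt_pos.2 hpos
  field_simp
  ring


lemma hasDerivAt_Lf {k : ℝ} (hk0 : 0 < k) (hk1 : k < 1) : HasDerivAt Lf 0 k := by
  have hpos : 0 < 1 - k ^ 2 := by nlinarith
  set b := Real.sqrt (1 - k ^ 2) with hbdef
  have hb0 : 0 < b := Real.sqrt_pos.2 hpos
  have hb2 : b ^ 2 = 1 - k ^ 2 := Real.sq_sqrt hpos.le
  have hb1 : b < 1 := by
    nlinarith [hb2]
  have hk2 : 1 - b ^ 2 = k ^ 2 := by rw [hb2]; ring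
  have hE := hasDerivAt_ellE hk0 hk1
  have hK := hasDerivAt_ellK hk0 hk1
  have hEb := hasDerivAt_ellE hb0 hb1
  have hKb := hasDerivAt_ellK hb0 hb1
  have hc := hasDerivAt_comp_sqrt hk0 hk1
  have hEc : HasDerivAt (fun x : ℝ => ellE (Real.sqrt (1 - x ^ 2)))
      (((ellE b - ellK b) / b) * (-k / b)) k := by
    have := hEb.comp k hc
    simpa [← hbdef, Function.comp_def] using this
  have hKc : HasDerivAt (fun x : ℝ => ellK (Real.sqrt (1 - x ^ 2)))
      (((ellE b - (1 - b ^ 2) * ellK b) / (b * (1 - b ^ 2))) * (-k / b)) k := by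
    have := hKb.comp k hc
    simpa [← hbdef, Function.comp_def] using this
  have hsum := ((hE.mul hKc).add (hEc.mul hK)).sub (hK.mul hKc)
  have : Lf = fun x => ellE x * ellK (Real.sqrt (1 - x ^ 2)) +
      ellE (Real.sqrt (1 - x ^ 2)) * ellK x - ellK x * ellK (Real.sqrt (1 - x ^ 2)) := rfl
  rw [this]
  refine hsum.congr_deriv ?_
  rw [← hbdef, hk2]
  rw [show (1:ℝ) - k ^ 2 = b ^ 2 from hb2.symm]
  field_simp
  linear_combination (ellE k * ellK b - ellK k * ellE b) * hb2

lemma Lf_eq {x y : ℝ} (hx0 : 0 < x) (hxy : x ≤ y) (hy1 : y < 1) : Lf x = Lf y := by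
  have h : ∫ t in x..y, (0:ℝ) = Lf y - Lf x := by
    apply intervalIntegral.integral_eq_sub_of_hasDerivAt
    · intro t ht
      rw [uIcc_of_le hxy] at ht
      exact hasDerivAt_Lf (lt_of_lt_of_le hx0 ht.1) (lt_of_le_of_lt ht.2 hy1)
    · exact intervalIntegrable_const
  simp at h
  linarith

end Lfun

lemma ellK_eq (k : ℝ) : ellK k = ∫ t in (0:ℝ)..1, Kint k t := rfl
lemma ellE_eq (k : ℝ) : ellE k = ∫ t in (0:ℝ)..1, Eint k t := rfl


section smallk
variable {k : ℝ} (hk0 : 0 < k) (hk : k ≤ 1/2)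
include hk0 hk

lemma hk1' : k < 1 := by linarith

lemma w_ge_half : (1/2 : ℝ) ≤ Real.sqrt (1 - k ^ 2) := by
  have h : ((1:ℝ)/2) = Real.sqrt ((1/2)^2) := (Real.sqrt_sq (by norm_num)).symm
  rw [h]
  apply Real.sqrt_le_sqrt
  nlinarith

lemma abs_EK_le : |ellE k - ellK k| ≤ π * k ^ 2 := by
  have hk1 := hk1' hk0 hk
  have h1 : ellE k - ellK k = ∫ t in (0:ℝ)..1, (Eint k t - Kint k t) :=
    (intervalIntegral.integral_sub (intInt_Eint hk0 hk1) (intInt_Kint hk0 hk1)).symm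
  rw [h1]
  have hval : ∫ t in (0:ℝ)..1, (2 * k ^ 2) * (1 / Real.sqrt (1 - t ^ 2)) = 2 * k ^ 2 * (π/2) := by
    rw [intervalIntegral.integral_const_mul, integral_one_div_sqrt]
  calc |∫ t in (0:ℝ)..1, (Eint k t - Kint k t)|
      ≤ |∫ t in (0:ℝ)..1, (2 * k ^ 2) * (1 / Real.sqrt (1 - t ^ 2))| := by
        rw [← Real.norm_eq_abs]
        apply intervalIntegral.norm_integral_le_abs_of_norm_le _
          (intInt_one_div_sqrt.const_mul _)
        rw [ae_restrict_iff' measurableSet_uIoc]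
        apply ae_unitIoc
        intro t ht0 ht1
        have h1t := pos_1t ht0 ht1
        have h2t := pos_1kt hk0.le hk1 ht0.le ht1.le
        have hs : 0 < Real.sqrt (1 - t ^ 2) := Real.sqrt_pos.2 h1t
        have hu : 0 < Real.sqrt (1 - k ^ 2 * t ^ 2) := Real.sqrt_pos.2 h2t
        have husq : Real.sqrt (1 - k ^ 2 * t ^ 2) ^ 2 = 1 - k ^ 2 * t ^ 2 := Real.sq_sqrt h2t.le
        have huh : (1/2 : ℝ) ≤ Real.sqrt (1 - k ^ 2 * t ^ 2) :=
          le_trans (w_ge_half hk0 hk) (Real.sqrt_le_sqrt (le_1kt hk0.le ht0.le ht1.le))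
        have hdiff : Eint k t - Kint k t
            = -(k ^ 2 * t ^ 2) / (Real.sqrt (1 - t ^ 2) * Real.sqrt (1 - k ^ 2 * t ^ 2)) := by
          rw [Eint, Kint, Real.sqrt_mul h1t.le]
          field_simp
          linear_combination husq
        rw [Real.norm_eq_abs, hdiff, abs_div, abs_neg,
          abs_of_nonneg (by positivity : (0:ℝ) ≤ k ^ 2 * t ^ 2),
          abs_of_nonneg (by positivity : (0:ℝ) ≤ Real.sqrt (1 - t ^ 2) * Real.sqrt (1 - k ^ 2 * t ^ 2))]
        rw [mul_one_div, div_le_div_iff₀ (by positivity) hs]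
        nlinarith [mul_le_mul_of_nonneg_left huh
            (by positivity : (0:ℝ) ≤ 2 * k ^ 2 * Real.sqrt (1 - t ^ 2)),
          mul_le_mul_of_nonneg_right (show t ^ 2 ≤ 1 by nlinarith)
            (by positivity : (0:ℝ) ≤ k ^ 2 * Real.sqrt (1 - t ^ 2))]
  _ = |2 * k ^ 2 * (π/2)| := by rw [hval]
  _ = π * k ^ 2 := by
        rw [abs_of_nonneg (by positivity)]
        ring

lemma abs_K_pi2 : |ellK k - π/2| ≤ π * k ^ 2 := by
  have hk1 := hk1' hk0 hk
  have h1 : ellK k - π/2 = ∫ t in (0:ℝ)..1, (Kint k t - 1 / Real.sqrt (1 - t ^ 2)) := by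
    rw [intervalIntegral.integral_sub (intInt_Kint hk0 hk1) intInt_one_div_sqrt,
      integral_one_div_sqrt, ellK_eq]
  rw [h1]
  have hval : ∫ t in (0:ℝ)..1, (2 * k ^ 2) * (1 / Real.sqrt (1 - t ^ 2)) = 2 * k ^ 2 * (π/2) := by
    rw [intervalIntegral.integral_const_mul, integral_one_div_sqrt]
  calc |∫ t in (0:ℝ)..1, (Kint k t - 1 / Real.sqrt (1 - t ^ 2))|
      ≤ |∫ t in (0:ℝ)..1, (2 * k ^ 2) * (1 / Real.sqrt (1 - t ^ 2))| := by
        rw [← Real.norm_eq_abs]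
        apply intervalIntegral.norm_integral_le_abs_of_norm_le _
          (intInt_one_div_sqrt.const_mul _)
        rw [ae_restrict_iff' measurableSet_uIoc]
        apply ae_unitIoc
        intro t ht0 ht1
        have h1t := pos_1t ht0 ht1
        have h2t := pos_1kt hk0.le hk1 ht0.le ht1.le
        have hs : 0 < Real.sqrt (1 - t ^ 2) := Real.sqrt_pos.2 h1t
        have hu : 0 < Real.sqrt (1 - k ^ 2 * t ^ 2) := Real.sqrt_pos.2 h2t
        have husq : Real.sqrt (1 - k ^ 2 * t ^ 2) ^ 2 = 1 - k ^ 2 * t ^ 2 := Real.sq_sqrt h2t.le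
        have hu1 : Real.sqrt (1 - k ^ 2 * t ^ 2) ≤ 1 :=
          Real.sqrt_le_one.2 (by nlinarith [sq_nonneg (k * t)])
        have huh : (1/2 : ℝ) ≤ Real.sqrt (1 - k ^ 2 * t ^ 2) :=
          le_trans (w_ge_half hk0 hk) (Real.sqrt_le_sqrt (le_1kt hk0.le ht0.le ht1.le))
        have hdiff : Kint k t - 1 / Real.sqrt (1 - t ^ 2)
            = (1 - Real.sqrt (1 - k ^ 2 * t ^ 2)) /
              (Real.sqrt (1 - t ^ 2) * Real.sqrt (1 - k ^ 2 * t ^ 2)) := by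
          rw [Kint, Real.sqrt_mul h1t.le]
          field_simp
          rw [sub_div, div_self (Real.sqrt_pos.2 (by linarith : (0:ℝ) < 1 - t ^ 2 * k ^ 2)).ne']
        rw [Real.norm_eq_abs, hdiff, abs_div,
          abs_of_nonneg (by linarith : (0:ℝ) ≤ 1 - Real.sqrt (1 - k ^ 2 * t ^ 2)),
          abs_of_nonneg (by positivity : (0:ℝ) ≤ Real.sqrt (1 - t ^ 2) * Real.sqrt (1 - k ^ 2 * t ^ 2))]
        rw [mul_one_div, div_le_div_iff₀ (by positivity) hs]
        -- (1 - u) * s ≤ 2k^2 * (s * u);  1 - u ≤ 1 - u^2 = k^2 t^2 ≤ k^2 ≤ 2 k^2 u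
        nlinarith [mul_le_mul_of_nonneg_right (show (1:ℝ) - Real.sqrt (1 - k ^ 2 * t ^ 2)
            ≤ 2 * k ^ 2 * Real.sqrt (1 - k ^ 2 * t ^ 2) by nlinarith [sq_nonneg (k*t), sq_nonneg t]) hs.le]
  _ = |2 * k ^ 2 * (π/2)| := by rw [hval]
  _ = π * k ^ 2 := by
        rw [abs_of_nonneg (by positivity)]
        ring

lemma abs_Eb_le : |ellE (Real.sqrt (1 - k ^ 2)) - 1| ≤ 2 * k := by
  have hk1 := hk1' hk0 hk
  have hb2 : Real.sqrt (1 - k ^ 2) ^ 2 = 1 - k ^ 2 := Real.sq_sqrt (by nlinarith)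
  have hb0 : 0 < Real.sqrt (1 - k ^ 2) := Real.sqrt_pos.2 (by nlinarith)
  have hb1 : Real.sqrt (1 - k ^ 2) < 1 := by nlinarith [hb2]
  set b := Real.sqrt (1 - k ^ 2) with hbdef
  have h1 : ellE b - 1 = ∫ t in (0:ℝ)..1, (Eint b t - 1) := by
    rw [intervalIntegral.integral_sub (intInt_Eint hb0 hb1) intervalIntegrable_const, ellE_eq]
    simp
  rw [h1]
  have hval : ∫ t in (0:ℝ)..1, k * (1 / Real.sqrt (1 - t ^ 2)) = k * (π/2) := by
    rw [intervalIntegral.integral_const_mul, integral_one_div_sqrt]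
  calc |∫ t in (0:ℝ)..1, (Eint b t - 1)|
      ≤ |∫ t in (0:ℝ)..1, k * (1 / Real.sqrt (1 - t ^ 2))| := by
        rw [← Real.norm_eq_abs]
        apply intervalIntegral.norm_integral_le_abs_of_norm_le _
          (intInt_one_div_sqrt.const_mul _)
        rw [ae_restrict_iff' measurableSet_uIoc]
        apply ae_unitIoc
        intro t ht0 ht1
        have h1t := pos_1t ht0 ht1
        have h2t := pos_1kt hb0.le hb1 ht0.le ht1.le
        have hs : 0 < Real.sqrt (1 - t ^ 2) := Real.sqrt_pos.2 h1t
        have hssq : Real.sqrt (1 - t ^ 2) ^ 2 = 1 - t ^ 2 := Real.sq_sqrt h1t.le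
        have hub : 0 < Real.sqrt (1 - b ^ 2 * t ^ 2) := Real.sqrt_pos.2 h2t
        have hsle : Real.sqrt (1 - t ^ 2) ≤ Real.sqrt (1 - b ^ 2 * t ^ 2) := by
          apply Real.sqrt_le_sqrt
          nlinarith [hb2, sq_nonneg t]
        have hule : Real.sqrt (1 - b ^ 2 * t ^ 2) ≤ Real.sqrt (1 - t ^ 2) + k * t := by
          have harg : 1 - b ^ 2 * t ^ 2 ≤ (Real.sqrt (1 - t ^ 2) + k * t) ^ 2 := by
            rw [add_sq]
            nlinarith [hssq, hb2, mul_nonneg (mul_nonneg hs.le hk0.le) ht0.le]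
          calc Real.sqrt (1 - b ^ 2 * t ^ 2) ≤ Real.sqrt ((Real.sqrt (1 - t ^ 2) + k * t) ^ 2) :=
                Real.sqrt_le_sqrt harg
          _ = Real.sqrt (1 - t ^ 2) + k * t := Real.sqrt_sq (by positivity)
        have hdiff : Eint b t - 1
            = (Real.sqrt (1 - b ^ 2 * t ^ 2) - Real.sqrt (1 - t ^ 2)) / Real.sqrt (1 - t ^ 2) := by
          rw [Eint]
          field_simp
        rw [Real.norm_eq_abs, hdiff, abs_div, abs_of_nonneg (by linarith), abs_of_nonneg hs.le,
          mul_one_div, div_le_div_iff₀ hs hs]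
        have : Real.sqrt (1 - b ^ 2 * t ^ 2) - Real.sqrt (1 - t ^ 2) ≤ k := by
          nlinarith [mul_le_mul_of_nonneg_left (show t ≤ 1 by linarith) hk0.le]
        nlinarith [mul_le_mul_of_nonneg_right this hs.le]
  _ = |k * (π/2)| := by rw [hval]
  _ ≤ 2 * k := by
        rw [abs_of_nonneg (by positivity)]
        nlinarith [pi_le_four]

lemma ellKb_le : ellK (Real.sqrt (1 - k ^ 2)) ≤ 1 + π / k := by
  have hk1 := hk1' hk0 hk
  have hb2 : Real.sqrt (1 - k ^ 2) ^ 2 = 1 - k ^ 2 := Real.sq_sqrt (by nlinarith)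
  have hb0 : 0 < Real.sqrt (1 - k ^ 2) := Real.sqrt_pos.2 (by nlinarith)
  have hb1 : Real.sqrt (1 - k ^ 2) < 1 := by nlinarith [hb2]
  set b := Real.sqrt (1 - k ^ 2) with hbdef
  have hsub1 : Set.uIcc (0:ℝ) (1/2) ⊆ Set.uIcc (0:ℝ) 1 := by
    rw [uIcc_of_le (by norm_num : (0:ℝ) ≤ 1/2), uIcc_of_le (by norm_num : (0:ℝ) ≤ 1)]
    exact Icc_subset_Icc (le_refl _) (by norm_num)
  have hsub2 : Set.uIcc (1/2:ℝ) 1 ⊆ Set.uIcc (0:ℝ) 1 := by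
    rw [uIcc_of_le (by norm_num : (1/2:ℝ) ≤ 1), uIcc_of_le (by norm_num : (0:ℝ) ≤ 1)]
    exact Icc_subset_Icc (by norm_num) (le_refl _)
  have hint1 : IntervalIntegrable (Kint b) volume 0 (1/2) := (intInt_Kint hb0 hb1).mono_set hsub1
  have hint2 : IntervalIntegrable (Kint b) volume (1/2) 1 := (intInt_Kint hb0 hb1).mono_set hsub2
  have hsplit : ellK b = (∫ t in (0:ℝ)..(1/2), Kint b t) + ∫ t in (1/2:ℝ)..1, Kint b t := by
    rw [ellK_eq, intervalIntegral.integral_add_adjacent_intervals hint1 hint2]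
  -- piece 1
  have hp1 : (∫ t in (0:ℝ)..(1/2), Kint b t) ≤ 1 := by
    have h2 : (∫ t in (0:ℝ)..(1/2), (2:ℝ)) = 1 := by simp
    have hmono : (∫ t in (0:ℝ)..(1/2), Kint b t) ≤ ∫ t in (0:ℝ)..(1/2), (2:ℝ) := by
      apply intervalIntegral.integral_mono_on (g := fun _ => (2:ℝ)) (by norm_num) hint1
        intervalIntegrable_const
      intro t ht
      obtain ⟨ht0, ht12⟩ := ht
      have h1t : (3/4:ℝ) ≤ 1 - t ^ 2 := by nlinarith
      have h2t : (3/4:ℝ) ≤ 1 - b ^ 2 * t ^ 2 := by nlinarith [hb2, sq_nonneg t, sq_nonneg b]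
      have harg : (1/4:ℝ) ≤ (1 - t ^ 2) * (1 - b ^ 2 * t ^ 2) := by nlinarith
      have hsq : (1/2:ℝ) ≤ Real.sqrt ((1 - t ^ 2) * (1 - b ^ 2 * t ^ 2)) := by
        have : ((1:ℝ)/2) = Real.sqrt ((1/2)^2) := (Real.sqrt_sq (by norm_num)).symm
        rw [this]
        apply Real.sqrt_le_sqrt
        nlinarith
      rw [Kint, div_le_iff₀ (by linarith)]
      linarith
    rw [h2] at hmono
    exact hmono
  -- piece 2
  have hintw : IntervalIntegrable (fun t : ℝ => (2/k) * (1 / Real.sqrt (1 - t ^ 2))) volume (1/2) 1 :=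
    (intInt_one_div_sqrt.const_mul _).mono_set hsub2
  have hp2 : (∫ t in (1/2:ℝ)..1, Kint b t) ≤ ∫ t in (1/2:ℝ)..1, (2/k) * (1 / Real.sqrt (1 - t ^ 2)) := by
    apply intervalIntegral.integral_mono_on (by norm_num) hint2 hintw
    intro t ht
    obtain ⟨ht12, ht1⟩ := ht
    rcases eq_or_lt_of_le ht1 with heq | hlt
    · rw [heq]
      norm_num [Kint]
    · have h1t := pos_1t (by linarith) hlt
      have hs : 0 < Real.sqrt (1 - t ^ 2) := Real.sqrt_pos.2 h1t
      have hub : (k * t) ≤ Real.sqrt (1 - b ^ 2 * t ^ 2) := by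
        have harg : (k * t) ^ 2 ≤ 1 - b ^ 2 * t ^ 2 := by nlinarith [hb2]
        calc k * t = Real.sqrt ((k * t) ^ 2) := (Real.sqrt_sq (by positivity)).symm
        _ ≤ _ := Real.sqrt_le_sqrt harg
      have hkt2 : k / 2 ≤ k * t := by nlinarith
      have hu2 : 0 < Real.sqrt (1 - b ^ 2 * t ^ 2) :=
        lt_of_lt_of_le (mul_pos hk0 (by linarith)) hub
      rw [Kint, Real.sqrt_mul h1t.le, mul_one_div, div_le_div_iff₀ (mul_pos hs hu2) hs]
      -- 1 * s ≤ (2/k) * (s * u)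
      have h5 : k / 2 * Real.sqrt (1 - t ^ 2) ≤ Real.sqrt (1 - b ^ 2 * t ^ 2) * Real.sqrt (1 - t ^ 2) :=
        mul_le_mul_of_nonneg_right (le_trans hkt2 hub) hs.le
      rw [div_mul_eq_mul_div, le_div_iff₀ hk0]
      nlinarith
  have hval : ∫ t in (1/2:ℝ)..1, (2/k) * (1 / Real.sqrt (1 - t ^ 2)) ≤ (2/k) * (π/2) := by
    rw [intervalIntegral.integral_const_mul]
    apply mul_le_mul_of_nonneg_left _ (div_pos (by norm_num) hk0).le
    have hadd : (∫ t in (0:ℝ)..(1/2), 1 / Real.sqrt (1 - t ^ 2))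
        + (∫ t in (1/2:ℝ)..1, 1 / Real.sqrt (1 - t ^ 2)) = π/2 := by
      rw [intervalIntegral.integral_add_adjacent_intervals (intInt_one_div_sqrt.mono_set hsub1)
        (intInt_one_div_sqrt.mono_set hsub2), integral_one_div_sqrt]
    have hnn : 0 ≤ ∫ t in (0:ℝ)..(1/2), 1 / Real.sqrt (1 - t ^ 2) := by
      apply intervalIntegral.integral_nonneg (by norm_num)
      intro u hu
      positivity
    linarith
  have : (2/k) * (π/2) = π / k := by field_simp
  linarith [hsplit, hp1, hp2, hval]

end smallk

lemma ellK_nonneg (x : ℝ) : 0 ≤ ellK x := by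
  apply intervalIntegral.integral_nonneg (by norm_num)
  intro t ht
  positivity

lemma Lf_near {k : ℝ} (hk0 : 0 < k) (hk : k ≤ 1/2) : |Lf k - π/2| ≤ 30 * k := by
  have hEK := abs_EK_le hk0 hk
  have hK2 := abs_K_pi2 hk0 hk
  have hEb := abs_Eb_le hk0 hk
  have hKb := ellKb_le hk0 hk
  have hKb0 := ellK_nonneg (Real.sqrt (1 - k ^ 2))
  have hK0 := ellK_nonneg k
  have hKle : ellK k ≤ π/2 + π * k ^ 2 := by
    have := (abs_le.1 hK2).2
    linarith
  have hid : Lf k - π/2 = (ellE k - ellK k) * ellK (Real.sqrt (1 - k ^ 2)) +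
      (ellE (Real.sqrt (1 - k ^ 2)) - 1) * ellK k + (ellK k - π/2) := by
    rw [Lf]
    ring
  rw [hid]
  have t1 : |(ellE k - ellK k) * ellK (Real.sqrt (1 - k ^ 2))| ≤ (π * k ^ 2) * (1 + π / k) := by
    rw [abs_mul, abs_of_nonneg hKb0]
    apply mul_le_mul hEK hKb hKb0 (by positivity)
  have t2 : |(ellE (Real.sqrt (1 - k ^ 2)) - 1) * ellK k| ≤ (2 * k) * (π/2 + π * k ^ 2) := by
    rw [abs_mul, abs_of_nonneg hK0]
    apply mul_le_mul hEb hKle hK0 (by positivity)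
  have habs : |(ellE k - ellK k) * ellK (Real.sqrt (1 - k ^ 2)) +
      (ellE (Real.sqrt (1 - k ^ 2)) - 1) * ellK k + (ellK k - π/2)|
      ≤ |(ellE k - ellK k) * ellK (Real.sqrt (1 - k ^ 2))| +
        |(ellE (Real.sqrt (1 - k ^ 2)) - 1) * ellK k| + |ellK k - π/2| :=
    (abs_add_le _ _).trans (add_le_add_left (abs_add_le _ _) _)
  have hexp : (π * k ^ 2) * (1 + π / k) = π * k ^ 2 + π ^ 2 * k := by
    field_simp
  have hfin : π * k ^ 2 + π ^ 2 * k + (2 * k) * (π/2 + π * k ^ 2) + π * k ^ 2 ≤ 30 * k := by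
    have hpi4 := pi_le_four
    have hpip := pi_pos
    have ha : π * k ^ 2 ≤ 2 * k := by
      nlinarith [mul_le_mul_of_nonneg_left hk hk0.le,
        mul_le_mul_of_nonneg_right hpi4 (sq_nonneg k)]
    have hb : π ^ 2 * k ≤ 16 * k := by
      nlinarith [mul_le_mul_of_nonneg_right (show π ^ 2 ≤ 16 by nlinarith) hk0.le]
    have hc : (2 * k) * (π/2 + π * k ^ 2) ≤ 6 * k := by
      have h1 : π * k ^ 2 ≤ 1 := by nlinarith [sq_nonneg k, mul_le_mul_of_nonneg_left hk hk0.le]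
      have h2 : π/2 + π * k ^ 2 ≤ 3 := by linarith
      nlinarith
    linarith
  calc |(ellE k - ellK k) * ellK (Real.sqrt (1 - k ^ 2)) +
      (ellE (Real.sqrt (1 - k ^ 2)) - 1) * ellK k + (ellK k - π/2)|
      ≤ (π * k ^ 2) * (1 + π / k) + (2 * k) * (π/2 + π * k ^ 2) + π * k ^ 2 := by
        have := add_le_add (add_le_add t1 t2) hK2
        linarith [habs]
  _ ≤ 30 * k := by
        rw [hexp]
        linarith [hfin]

lemma Lf_value {k : ℝ} (hk0 : 0 < k) (hk1 : k < 1) : Lf k = π/2 := by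
  apply eq_of_forall_dist_le
  intro ε hε
  rw [Real.dist_eq]
  set x := min (1/2 : ℝ) (ε/30) with hxdef
  have hx0 : 0 < x := lt_min (by norm_num) (by positivity)
  have hx2 : x ≤ 1/2 := min_le_left _ _
  have hx1 : x < 1 := lt_of_le_of_lt hx2 (by norm_num)
  have hxk : Lf x = Lf k := by
    rcases le_total x k with h | h
    · exact Lf_eq hx0 h hk1
    · exact (Lf_eq hk0 h hx1).symm
  rw [← hxk]
  calc |Lf x - π/2| ≤ 30 * x := Lf_near hx0 hx2
  _ ≤ 30 * (ε/30) := by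
      apply mul_le_mul_of_nonneg_left (min_le_right _ _) (by norm_num)
  _ = ε := by ring

/-- The Legendre relation `E K' + E' K − K K' = π/2` for `0 < k < 1`,
with `k' = √(1−k²)`. -/
theorem legendre_relation (k : ℝ) (hk0 : 0 < k) (hk1 : k < 1) :
    ellE k * ellK (Real.sqrt (1 - k ^ 2)) + ellE (Real.sqrt (1 - k ^ 2)) * ellK k -
      ellK k * ellK (Real.sqrt (1 - k ^ 2)) = Real.pi / 2 :=
  Lf_value hk0 hk1
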